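/- Consider the polar unicycle under the nonovershooting feedback with gains k₁,k₂,k₃,k₄ > 0. Along every closed-loop solution (ρ,δ,γ) on an interval I = [t₀,T*) with ρ(t) > 0 and |δ(t)| < π for all t ∈ I, the backstepping variable z(t) = γ(t) + (1/2) arctan(4k₂ tan(δ(t)/2)) satisfies the ODE dz/dt(t) = −(k₄ + (k₃/k₂) ψ(z(t),γ(t))² N(δ(t)) (1 + tan²(δ(t)/2))) z(t). Consequently, if z(t₀) ≥ 0 then 0 ≤ z(t) ≤ z(t₀) e^{−k₄ (t−t₀)} for all t ∈ I; in particular z is nonnegative and nonincreasing. -/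

import Mathlib

/-!
STATEMENT 18: Nonovershooting feedback for the polar unicycle: along every
closed-loop solution on I = [t₀,T*) with ρ > 0 and |δ| < π, the backstepping
variable z = γ + (1/2) arctan(4k₂ tan(δ/2)) satisfies
dz/dt = −(k₄ + (k₃/k₂) ψ(z,γ)² N(δ) (1 + tan²(δ/2))) z;
consequently, if z(t₀) ≥ 0 then 0 ≤ z(t) ≤ z(t₀) e^{−k₄(t−t₀)} on I.
-/
noncomputable section

open Real

/-- backstepping variable z = γ + (1/2) arctan(4k₂ tan(δ/2)) -/
def zN (k₂ δ γ : ℝ) : ℝ := γ + (1 / 2) * Real.arctan (4 * k₂ * Real.tan (δ / 2))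

/-- N(δ) = √(1 + 16k₂² tan²(δ/2)) -/
def NN (k₂ δ : ℝ) : ℝ := Real.sqrt (1 + 16 * k₂ ^ 2 * Real.tan (δ / 2) ^ 2)

/-- ψ(z,γ) = (sin(2z−2γ) + sin(2γ))/(2z) for z ≠ 0, ψ(0,γ) = cos(2γ) -/
def psiN (z γ : ℝ) : ℝ :=
  if z = 0 then Real.cos (2 * γ)
  else (Real.sin (2 * z - 2 * γ) + Real.sin (2 * γ)) / (2 * z)

/-- nonovershooting forward velocity v = k₁ ρ cos γ -/
def vN (k₁ ρ γ : ℝ) : ℝ := k₁ * ρ * Real.cos γ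

/-- ω̃ of the nonovershooting feedback -/
def omTildeN (k₁ k₂ k₃ k₄ δ γ : ℝ) : ℝ :=
  (k₄ + (k₃ / k₂) * psiN (zN k₂ δ γ) γ ^ 2 * NN k₂ δ
      * (1 + Real.tan (δ / 2) ^ 2)) * zN k₂ δ γ
    + (k₁ * k₂ / 2) * Real.sin (2 * γ)
        / (Real.cos (δ / 2) ^ 2 + 16 * k₂ ^ 2 * Real.sin (δ / 2) ^ 2)

/-- nonovershooting angular velocity ω = (k₁/2) sin(2γ) + ω̃ -/
def omN (k₁ k₂ k₃ k₄ δ γ : ℝ) : ℝ :=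
  (k₁ / 2) * Real.sin (2 * γ) + omTildeN k₁ k₂ k₃ k₄ δ γ

theorem nonovershooting_z_dynamics_and_decay
    (k₁ k₂ k₃ k₄ : ℝ) (hk₁ : 0 < k₁) (hk₂ : 0 < k₂) (hk₃ : 0 < k₃) (hk₄ : 0 < k₄)
    (t₀ Tstar : ℝ) (ht₀ : t₀ < Tstar)
    (ρ δ γ : ℝ → ℝ)
    (hρpos : ∀ t ∈ Set.Ico t₀ Tstar, 0 < ρ t)
    (hδπ : ∀ t ∈ Set.Ico t₀ Tstar, |δ t| < Real.pi)
    (hρ : ∀ t ∈ Set.Ico t₀ Tstar,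
      HasDerivAt ρ (-(vN k₁ (ρ t) (γ t)) * Real.cos (γ t)) t)
    (hδ : ∀ t ∈ Set.Ico t₀ Tstar,
      HasDerivAt δ ((vN k₁ (ρ t) (γ t) / ρ t) * Real.sin (γ t)) t)
    (hγ : ∀ t ∈ Set.Ico t₀ Tstar,
      HasDerivAt γ ((vN k₁ (ρ t) (γ t) / ρ t) * Real.sin (γ t)
        - omN k₁ k₂ k₃ k₄ (δ t) (γ t)) t) :
    (∀ t ∈ Set.Ico t₀ Tstar,
      HasDerivAt (fun s => zN k₂ (δ s) (γ s))
        (-(k₄ + (k₃ / k₂) * psiN (zN k₂ (δ t) (γ t)) (γ t) ^ 2 * NN k₂ (δ t)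
            * (1 + Real.tan (δ t / 2) ^ 2)) * zN k₂ (δ t) (γ t)) t)
    ∧ (0 ≤ zN k₂ (δ t₀) (γ t₀) →
        ∀ t ∈ Set.Ico t₀ Tstar,
          0 ≤ zN k₂ (δ t) (γ t)
          ∧ zN k₂ (δ t) (γ t)
              ≤ zN k₂ (δ t₀) (γ t₀) * Real.exp (-k₄ * (t - t₀))) := by
  have key : ∀ t ∈ Set.Ico t₀ Tstar,
      HasDerivAt (fun s => zN k₂ (δ s) (γ s))
        (-(k₄ + (k₃ / k₂) * psiN (zN k₂ (δ t) (γ t)) (γ t) ^ 2 * NN k₂ (δ t)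
            * (1 + Real.tan (δ t / 2) ^ 2)) * zN k₂ (δ t) (γ t)) t := by
    intro t ht
    have hδt := hδ t ht
    have hγt := hγ t ht
    have hρt : (0:ℝ) < ρ t := hρpos t ht
    have hρ0 : ρ t ≠ 0 := ne_of_gt hρt
    have habs := hδπ t ht
    rw [abs_lt] at habs
    have hmem : δ t / 2 ∈ Set.Ioo (-(Real.pi/2)) (Real.pi/2) :=
      ⟨by linarith [habs.1], by linarith [habs.2]⟩
    have hCpos : 0 < Real.cos (δ t / 2) := Real.cos_pos_of_mem_Ioo hmem
    have hC : Real.cos (δ t / 2) ≠ 0 := ne_of_gt hCpos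
    have h2 : HasDerivAt (fun s => Real.tan (δ s / 2))
        (1 / Real.cos (δ t / 2) ^ 2 * ((vN k₁ (ρ t) (γ t) / ρ t) * Real.sin (γ t) / 2)) t :=
      by have := (Real.hasDerivAt_tan hC).comp t (hδt.div_const 2); exact this
    have h4 := ((Real.hasDerivAt_arctan (4 * k₂ * Real.tan (δ t / 2))).comp t
        (h2.const_mul (4 * k₂))).const_mul (1/2 : ℝ)
    have h6 := hγt.add h4
    have hfun : (fun s => zN k₂ (δ s) (γ s))
        = fun s => γ s + (1/2 : ℝ) * Real.arctan (4 * k₂ * Real.tan (δ s / 2)) := rfl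
    rw [hfun]
    refine h6.congr_deriv ?_
    symm
  
    have hC2 : Real.cos (δ t / 2) ^ 2 ≠ 0 := pow_ne_zero 2 hC
    have hden : Real.cos (δ t / 2) ^ 2 + 16 * k₂ ^ 2 * Real.sin (δ t / 2) ^ 2 ≠ 0 := by
      have h1 : 0 < Real.cos (δ t / 2) ^ 2 := by positivity
      positivity
    simp only [vN, omN, omTildeN]
    rw [Real.tan_eq_sin_div_cos, Real.sin_two_mul]
    have hX : (1 : ℝ) + (4 * k₂ * (Real.sin (δ t / 2) / Real.cos (δ t / 2))) ^ 2 ≠ 0 := by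
      positivity
    field_simp
    ring
  refine ⟨key, ?_⟩
  intro hz0
  have hK : ∀ x : ℝ, 0 ≤ (k₃ / k₂) * psiN (zN k₂ (δ x) (γ x)) (γ x) ^ 2 * NN k₂ (δ x)
      * (1 + Real.tan (δ x / 2) ^ 2) := by
    intro x
    have hN : 0 ≤ NN k₂ (δ x) := Real.sqrt_nonneg _
    have ht2 : (0:ℝ) ≤ 1 + Real.tan (δ x / 2) ^ 2 := by positivity
    exact mul_nonneg (mul_nonneg (mul_nonneg (div_nonneg hk₃.le hk₂.le) (sq_nonneg _)) hN) ht2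
  -- nonnegativity
  have hnn : ∀ u ∈ Set.Ico t₀ Tstar, 0 ≤ zN k₂ (δ u) (γ u) := by
    intro u hu
    by_contra hneg
    push_neg at hneg
    have hsub : Set.Icc t₀ u ⊆ Set.Ico t₀ Tstar := fun a ha => ⟨ha.1, lt_of_le_of_lt ha.2 hu.2⟩
    have hcont : ContinuousOn (fun s => zN k₂ (δ s) (γ s)) (Set.Icc t₀ u) := fun a ha =>
      ((key a (hsub ha)).continuousAt).continuousWithinAt
    set S := Set.Icc t₀ u ∩ (fun s => zN k₂ (δ s) (γ s)) ⁻¹' Set.Ici 0 with hS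
    have hSne : S.Nonempty := ⟨t₀, ⟨le_refl _, hu.1⟩, hz0⟩
    have hSclosed : IsClosed S := hcont.preimage_isClosed_of_isClosed isClosed_Icc isClosed_Ici
    have hScpt : IsCompact S := isCompact_Icc.of_isClosed_subset hSclosed Set.inter_subset_left
    obtain ⟨hsIcc, hsZ⟩ := hScpt.sSup_mem hSne
    set c := sSup S with hc
    have hcu : c < u := lt_of_le_of_ne hsIcc.2 (by
      intro h; rw [h] at hsZ; exact absurd hsZ (not_le.mpr hneg))
    have hZneg : ∀ x ∈ Set.Ioo c u, zN k₂ (δ x) (γ x) < 0 := by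
      intro x hx
      by_contra h
      push_neg at h
      have hxS : x ∈ S := ⟨⟨le_trans hsIcc.1 hx.1.le, hx.2.le⟩, h⟩
      exact absurd (le_csSup hScpt.bddAbove hxS) (not_le.mpr hx.1)
    have hsub2 : Set.Icc c u ⊆ Set.Ico t₀ Tstar := fun a ha =>
      ⟨le_trans hsIcc.1 ha.1, lt_of_le_of_lt ha.2 hu.2⟩
    have hmono : MonotoneOn (fun s => zN k₂ (δ s) (γ s)) (Set.Icc c u) := by
      apply monotoneOn_of_deriv_nonneg (convex_Icc _ _)
      · exact fun a ha => ((key a (hsub2 ha)).continuousAt).continuousWithinAt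
      · rw [interior_Icc]
        exact fun a ha =>
          ((key a (hsub2 (Set.Ioo_subset_Icc_self ha))).differentiableAt).differentiableWithinAt
      · rw [interior_Icc]
        intro x hx
        rw [(key x (hsub2 (Set.Ioo_subset_Icc_self hx))).deriv]
        have h1 := hZneg x hx
        have h2 := hK x
        nlinarith [mul_pos hk₄ (neg_pos.mpr h1), mul_nonneg h2 (neg_nonneg.mpr h1.le)]
    have := hmono (Set.left_mem_Icc.mpr hcu.le) (Set.right_mem_Icc.mpr hcu.le) hcu.le
    have h0 : (0:ℝ) ≤ zN k₂ (δ c) (γ c) := hsZ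
    simp only at this
    linarith
  intro t ht
  refine ⟨hnn t ht, ?_⟩
  -- decay bound via W s = z s * exp (k₄ (s - t₀))
  have hsub : Set.Icc t₀ t ⊆ Set.Ico t₀ Tstar := fun a ha => ⟨ha.1, lt_of_le_of_lt ha.2 ht.2⟩
  have hWd : ∀ x ∈ Set.Ico t₀ Tstar,
      HasDerivAt (fun s => zN k₂ (δ s) (γ s) * Real.exp (k₄ * (s - t₀)))
        (-(k₄ + (k₃ / k₂) * psiN (zN k₂ (δ x) (γ x)) (γ x) ^ 2 * NN k₂ (δ x)
            * (1 + Real.tan (δ x / 2) ^ 2)) * zN k₂ (δ x) (γ x) * Real.exp (k₄ * (x - t₀))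
          + zN k₂ (δ x) (γ x) * (Real.exp (k₄ * (x - t₀)) * k₄)) x := by
    intro x hx
    have ha : HasDerivAt (fun s => k₄ * (s - t₀)) (k₄ * 1) x :=
      ((hasDerivAt_id x).sub_const t₀).const_mul k₄
    have he := ha.exp
    rw [mul_one] at he
    exact (key x hx).mul he
  have hanti : AntitoneOn (fun s => zN k₂ (δ s) (γ s) * Real.exp (k₄ * (s - t₀)))
      (Set.Icc t₀ t) := by
    apply antitoneOn_of_deriv_nonpos (convex_Icc _ _)
    · exact fun a ha => ((hWd a (hsub ha)).continuousAt).continuousWithinAt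
    · rw [interior_Icc]
      exact fun a ha =>
        ((hWd a (hsub (Set.Ioo_subset_Icc_self ha))).differentiableAt).differentiableWithinAt
    · rw [interior_Icc]
      intro x hx
      have hx' := hsub (Set.Ioo_subset_Icc_self hx)
      rw [(hWd x hx').deriv]
      have h1 := hnn x hx'
      have h2 := hK x
      have h3 := Real.exp_pos (k₄ * (x - t₀))
      nlinarith [mul_nonneg (mul_nonneg h2 h1) h3.le]
  have hWle := hanti (Set.left_mem_Icc.mpr ht.1) (Set.right_mem_Icc.mpr ht.1) ht.1
  simp only [sub_self, mul_zero, Real.exp_zero, mul_one] at hWle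
  have hepos := Real.exp_pos (k₄ * (t - t₀))
  rw [neg_mul, Real.exp_neg, ← div_eq_mul_inv]
  exact (le_div_iff₀ hepos).mpr hWle

end
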